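/- Let d ≥ 1, let E = {E_i}_{i=1}^{d²} be an unbiased MIC (tr E_i = 1/d for all i) for d×d complex matrices with Gram matrix G, and let F = {F_i}_{i=1}^{d²} be an unbiased Wigner basis (tr F_i = 1/d for all i). Let λ_1,…,λ_{d²} be the eigenvalues of G. Then Σ_j tr(E_j F_j) ≤ (1/√d)·Σ_k √λ_k, with equality if and only if F is the principal Wigner basis PW(E) of E. -/

import Mathlib

open Matrix BigOperators
open scoped ComplexOrder Kronecker

/-- A measure basis: a linearly independent family of `d²` Hermitian `d×d` complex
matrices summing to the identity, with nonnegative traces. -/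
def IsMeasureBasis {d : ℕ} (L : Fin (d ^ 2) → Matrix (Fin d) (Fin d) ℂ) : Prop :=
  (∀ i, (L i).IsHermitian) ∧ LinearIndependent ℝ L ∧ (∑ i, L i) = 1 ∧ ∀ i, 0 ≤ ((L i).trace).re

/-- A Wigner basis: an orthogonal measure basis. -/
def IsWignerBasis {d : ℕ} (L : Fin (d ^ 2) → Matrix (Fin d) (Fin d) ℂ) : Prop :=
  IsMeasureBasis L ∧ ∀ i j, i ≠ j → (L i * L j).trace = 0

/-- The rescaled frame operator `S_L(X) = ∑ⱼ (tr(X Lⱼ)/lⱼ) Lⱼ`. -/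
noncomputable def rsFrameOp {n : Type*} [Fintype n] {m : Type*} [Fintype m] [DecidableEq m]
    (L : n → Matrix m m ℂ) (X : Matrix m m ℂ) : Matrix m m ℂ :=
  ∑ j, (((X * L j).trace) / ((L j).trace)) • L j

/-- A map on matrices that is ℝ-linear, Hermiticity-preserving, self-adjoint with respect to
the Hilbert–Schmidt inner product on Hermitian matrices, and positive. -/
def IsPosSelfAdjMap {m : Type*} [Fintype m]
    (T : Matrix m m ℂ → Matrix m m ℂ) : Prop :=
  IsLinearMap ℝ T ∧ (∀ X, X.IsHermitian → (T X).IsHermitian) ∧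
  (∀ X Y, X.IsHermitian → Y.IsHermitian → (T X * Y).trace = (X * T Y).trace) ∧
  (∀ X, X.IsHermitian → 0 ≤ ((X * T X).trace).re)

/-- `T` is the (unique) positive self-adjoint inverse square root of the rescaled frame
operator of `L`, i.e. `S_L ∘ T ∘ T = id` on Hermitian matrices; `PW(L) i = T (L i)`. -/
def IsInvSqrtOfFrameOp {n : Type*} [Fintype n] {m : Type*} [Fintype m] [DecidableEq m]
    (L : n → Matrix m m ℂ) (T : Matrix m m ℂ → Matrix m m ℂ) : Prop :=
  IsPosSelfAdjMap T ∧ ∀ X : Matrix m m ℂ, X.IsHermitian → rsFrameOp L (T (T X)) = X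

/-! ### Auxiliary theory: the real inner product space of Hermitian matrices -/

namespace TOB
variable {d : ℕ}

lemma trace_mul_star_self (X : Matrix (Fin d) (Fin d) ℂ) :
    (Xᴴ * X).trace = ∑ i, ∑ j, (Complex.normSq (X j i) : ℂ) := by
  simp only [Matrix.trace, Matrix.diag, Matrix.mul_apply, Matrix.conjTranspose_apply]
  congr 1; ext i; congr 1; ext j
  rw [Complex.normSq_eq_conj_mul_self]
  rfl

lemma trace_herm_real {X Y : Matrix (Fin d) (Fin d) ℂ} (hX : X.IsHermitian)
    (hY : Y.IsHermitian) : ((X * Y).trace : ℂ) = (((X * Y).trace).re : ℂ) := by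
  have h : star ((X * Y).trace) = (X * Y).trace := by
    rw [← Matrix.trace_conjTranspose, Matrix.conjTranspose_mul, hX.eq, hY.eq,
      Matrix.trace_mul_comm]
  exact ((Complex.conj_eq_iff_re).1 h).symm

noncomputable def HermSub (d : ℕ) : Submodule ℝ (Matrix (Fin d) (Fin d) ℂ) where
  carrier := {X | X.IsHermitian}
  add_mem' := fun h1 h2 => h1.add h2
  zero_mem' := Matrix.isHermitian_zero
  smul_mem' := fun c X hX => by
    show Matrix.IsHermitian _
    unfold Matrix.IsHermitian
    rw [Matrix.conjTranspose_smul, star_trivial, (hX : Matrix.IsHermitian X).eq]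

noncomputable instance : Inner ℝ (HermSub d) :=
  ⟨fun X Y => (((X : Matrix (Fin d) (Fin d) ℂ) * Y).trace).re⟩

lemma hinner_def (X Y : HermSub d) :
    (inner ℝ X Y : ℝ) = (((X : Matrix (Fin d) (Fin d) ℂ) * Y).trace).re := rfl

lemma hinner_comm (X Y : HermSub d) : (inner ℝ X Y : ℝ) = inner ℝ Y X := by
  rw [hinner_def, hinner_def, Matrix.trace_mul_comm]

@[reducible]
noncomputable def hermCore (d : ℕ) : InnerProductSpace.Core ℝ (HermSub d) where
  inner X Y := inner ℝ X Y
  conj_inner_symm x y := by simpa using hinner_comm y x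
  re_inner_nonneg x := by
    have hx := x.2
    have : ((x : Matrix (Fin d) (Fin d) ℂ) * x).trace
        = ∑ i, ∑ j, (Complex.normSq ((x : Matrix (Fin d) (Fin d) ℂ) j i) : ℂ) := by
      rw [← trace_mul_star_self]
      congr 1
      rw [(hx : Matrix.IsHermitian _).eq]
    rw [RCLike.re_to_real, hinner_def, this, Complex.re_sum]
    refine Finset.sum_nonneg fun i _ => ?_
    rw [Complex.re_sum]
    exact Finset.sum_nonneg fun j _ => by simp [Complex.normSq_nonneg]
  definite x hx := by
    have hxh := x.2
    have : ((x : Matrix (Fin d) (Fin d) ℂ) * x).trace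
        = ∑ i, ∑ j, (Complex.normSq ((x : Matrix (Fin d) (Fin d) ℂ) j i) : ℂ) := by
      rw [← trace_mul_star_self]
      congr 1
      rw [(hxh : Matrix.IsHermitian _).eq]
    rw [hinner_def, this, Complex.re_sum] at hx
    simp only [Complex.re_sum, Complex.ofReal_re] at hx
    have hz : ∀ j i, Complex.normSq ((x : Matrix (Fin d) (Fin d) ℂ) j i) = 0 := by
      intro j i
      have hsum : ∑ i, ∑ j, Complex.normSq ((x : Matrix (Fin d) (Fin d) ℂ) j i) = 0 := hx
      have := Finset.sum_eq_zero_iff_of_nonneg (fun i _ => Finset.sum_nonneg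
        (fun j _ => Complex.normSq_nonneg _)) |>.1 hsum i (Finset.mem_univ i)
      exact (Finset.sum_eq_zero_iff_of_nonneg
        (fun j _ => Complex.normSq_nonneg _)).1 this j (Finset.mem_univ j)
    ext i j
    exact Complex.normSq_eq_zero.1 (hz i j)
  add_left x y z := by
    simp [hinner_def, Submodule.coe_add, Matrix.add_mul, Matrix.trace_add, Complex.add_re]
  smul_left x y r := by
    simp only [hinner_def, Submodule.coe_smul]
    rw [Matrix.smul_mul]
    simp [Matrix.trace_smul, Complex.real_smul]

noncomputable instance : NormedAddCommGroup (HermSub d) := (hermCore d).toNormedAddCommGroup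

noncomputable instance : InnerProductSpace ℝ (HermSub d) := InnerProductSpace.ofCore (hermCore d).toCore

instance : FiniteDimensional ℝ (Matrix (Fin d) (Fin d) ℂ) :=
  Module.Finite.trans ℂ (Matrix (Fin d) (Fin d) ℂ)

noncomputable def hermToMat (d : ℕ) :
    (HermSub d × HermSub d) →ₗ[ℝ] Matrix (Fin d) (Fin d) ℂ where
  toFun p := (p.1 : Matrix (Fin d) (Fin d) ℂ) + Complex.I • (p.2 : Matrix (Fin d) (Fin d) ℂ)
  map_add' p q := by
    simp only [Prod.fst_add, Submodule.coe_add, Prod.snd_add, smul_add]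
    abel
  map_smul' r p := by
    simp only [Prod.smul_fst, Submodule.coe_smul, Prod.smul_snd, RingHom.id_apply, smul_add]
    rw [smul_comm]

lemma hermToMat_bij : Function.Bijective (hermToMat d) := by
  constructor
  · rw [← LinearMap.ker_eq_bot, LinearMap.ker_eq_bot']
    rintro ⟨X, Y⟩ h
    simp only [hermToMat, LinearMap.coe_mk, AddHom.coe_mk] at h
    have h2 := congrArg Matrix.conjTranspose h
    rw [Matrix.conjTranspose_add, Matrix.conjTranspose_smul, (X.2 : Matrix.IsHermitian _).eq,
      (Y.2 : Matrix.IsHermitian _).eq, Matrix.conjTranspose_zero] at h2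
    have hstar : (star Complex.I) = -Complex.I := by simp
    rw [hstar] at h2
    have hX : (X : Matrix (Fin d) (Fin d) ℂ) = 0 := by
      have hsum : (X : Matrix (Fin d) (Fin d) ℂ) + (X : Matrix (Fin d) (Fin d) ℂ) = 0 := by
        have := congrArg₂ (· + ·) h h2
        simp only [add_zero] at this
        calc (X : Matrix (Fin d) (Fin d) ℂ) + (X : Matrix (Fin d) (Fin d) ℂ)
            = ((X : Matrix (Fin d) (Fin d) ℂ) + Complex.I • (Y : Matrix (Fin d) (Fin d) ℂ))
              + ((X : Matrix (Fin d) (Fin d) ℂ) + (-Complex.I) • (Y : Matrix (Fin d) (Fin d) ℂ)) := by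
              rw [neg_smul]; abel
          _ = 0 := this
      have h2smul : (2 : ℂ) • (X : Matrix (Fin d) (Fin d) ℂ) = 0 := by
        rw [two_smul]; exact hsum
      calc (X : Matrix (Fin d) (Fin d) ℂ)
          = (2:ℂ)⁻¹ • ((2:ℂ) • (X : Matrix (Fin d) (Fin d) ℂ)) := by
            rw [smul_smul]; norm_num
        _ = 0 := by rw [h2smul, smul_zero]
    have hY : (Y : Matrix (Fin d) (Fin d) ℂ) = 0 := by
      rw [hX, zero_add] at h
      have := congrArg (fun M => (-Complex.I) • M) h
      simp only [smul_smul, smul_zero] at this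
      rw [show (-Complex.I) * Complex.I = 1 by simp [Complex.I_mul_I], one_smul] at this
      exact this
    ext <;> simp_all <;> rfl
  · intro M
    have hXh : ((2 : ℂ)⁻¹ • (M + Mᴴ)).IsHermitian := by
      unfold Matrix.IsHermitian
      rw [Matrix.conjTranspose_smul, Matrix.conjTranspose_add, Matrix.conjTranspose_conjTranspose]
      simp [add_comm]
    have hYh : ((-(Complex.I/2)) • (M - Mᴴ)).IsHermitian := by
      unfold Matrix.IsHermitian
      rw [Matrix.conjTranspose_smul, Matrix.conjTranspose_sub, Matrix.conjTranspose_conjTranspose]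
      have : (star (-(Complex.I/2))) = Complex.I/2 := by simp [div_eq_mul_inv]
      rw [this]
      module
    refine ⟨(⟨_, hXh⟩, ⟨_, hYh⟩), ?_⟩
    simp only [hermToMat, LinearMap.coe_mk, AddHom.coe_mk]
    rw [smul_smul]
    rw [show Complex.I * (-(Complex.I/2)) = (2:ℂ)⁻¹ by
      rw [show Complex.I * (-(Complex.I/2)) = -(Complex.I*Complex.I)/2 by ring,
        Complex.I_mul_I]; norm_num]
    rw [← smul_add, show (M + Mᴴ) + (M - Mᴴ) = (2:ℂ) • M by rw [two_smul]; abel, smul_smul]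
    norm_num

noncomputable def hermEquiv (d : ℕ) : (HermSub d × HermSub d) ≃ₗ[ℝ] Matrix (Fin d) (Fin d) ℂ :=
  LinearEquiv.ofBijective (hermToMat d) hermToMat_bij

lemma finrank_hermSub : Module.finrank ℝ (HermSub d) = d ^ 2 := by
  have h := (hermEquiv d).finrank_eq
  rw [Module.finrank_prod] at h
  rw [Module.finrank_matrix, Complex.finrank_real_complex, Fintype.card_fin] at h
  rw [pow_two]
  omega

noncomputable def opOf (T : Matrix (Fin d) (Fin d) ℂ → Matrix (Fin d) (Fin d) ℂ)
    (hlin : IsLinearMap ℝ T)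
    (hherm : ∀ X : Matrix (Fin d) (Fin d) ℂ, X.IsHermitian → (T X).IsHermitian) :
    HermSub d →ₗ[ℝ] HermSub d where
  toFun x := ⟨T x, hherm _ x.2⟩
  map_add' x y := Subtype.ext (by simpa using hlin.map_add x.1 y.1)
  map_smul' r x := Subtype.ext (by simpa using hlin.map_smul r x.1)

@[simp] lemma opOf_coe (T hlin hherm) (x : HermSub d) :
    ((opOf T hlin hherm x : HermSub d) : Matrix (Fin d) (Fin d) ℂ) = T x := rfl

noncomputable def SmOp (E : Fin (d^2) → Matrix (Fin d) (Fin d) ℂ)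
    (hEh : ∀ i, (E i).IsHermitian) : HermSub d →ₗ[ℝ] HermSub d where
  toFun x := ∑ j, ((d:ℝ) * (((x : Matrix (Fin d) (Fin d) ℂ) * E j).trace).re)
      • (⟨E j, hEh j⟩ : HermSub d)
  map_add' x y := by
    simp only [Submodule.coe_add, Matrix.add_mul, Matrix.trace_add, Complex.add_re, mul_add,
      add_smul]
    rw [Finset.sum_add_distrib]
  map_smul' r x := by
    simp only [Submodule.coe_smul, Matrix.smul_mul, Matrix.trace_smul, RingHom.id_apply]
    rw [Finset.smul_sum]
    refine Finset.sum_congr rfl fun j _ => ?_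
    rw [smul_smul]
    congr 1
    simp only [Complex.real_smul, Complex.mul_re, Complex.ofReal_re, Complex.ofReal_im]
    ring

lemma SmOp_coe (E : Fin (d^2) → Matrix (Fin d) (Fin d) ℂ)
    (hEh : ∀ i, (E i).IsHermitian) (hEunb : ∀ i, (E i).trace = ((d:ℂ))⁻¹) (x : HermSub d) :
    ((SmOp E hEh x : HermSub d) : Matrix (Fin d) (Fin d) ℂ)
      = rsFrameOp E (x : Matrix (Fin d) (Fin d) ℂ) := by
  unfold rsFrameOp SmOp
  simp only [LinearMap.coe_mk, AddHom.coe_mk]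
  rw [Submodule.coe_sum]
  refine Finset.sum_congr rfl fun j _ => ?_
  rw [Submodule.coe_smul]
  rw [hEunb j, div_inv_eq_mul, trace_herm_real x.2 (hEh j)]
  rw [show ((((x : Matrix (Fin d) (Fin d) ℂ) * E j).trace).re : ℂ) * (d:ℂ)
      = (((((x : Matrix (Fin d) (Fin d) ℂ) * E j).trace).re * (d:ℝ) : ℝ) : ℂ) by push_cast; ring]
  rw [show ((((((x : Matrix (Fin d) (Fin d) ℂ) * E j).trace).re * (d:ℝ) : ℝ)) : ℂ)
      = algebraMap ℝ ℂ ((((x : Matrix (Fin d) (Fin d) ℂ) * E j).trace).re * (d:ℝ)) from rfl,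
    algebraMap_smul]
  rw [mul_comm]
  simp [Complex.ofReal_re]

end TOB

open scoped RealInnerProductSpace

set_option maxHeartbeats 1600000

/-- for an unbiased MIC `E` with Gram matrix `G` (eigenvalues `λₖ`) and an
unbiased Wigner basis `F`, `∑ⱼ tr(Eⱼ Fⱼ) ≤ (1/√d) ∑ₖ √λₖ`, with equality iff
`F = PW(E)`. -/
theorem trace_overlap_bound {d : ℕ} [NeZero d]
    (E : Fin (d ^ 2) → Matrix (Fin d) (Fin d) ℂ)
    (hE : IsMeasureBasis E) (hEpsd : ∀ i, (E i).PosSemidef)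
    (hEunb : ∀ i, (E i).trace = ((d : ℂ))⁻¹)
    (F : Fin (d ^ 2) → Matrix (Fin d) (Fin d) ℂ)
    (hF : IsWignerBasis F) (hFunb : ∀ i, (F i).trace = ((d : ℂ))⁻¹)
    (G : Matrix (Fin (d ^ 2)) (Fin (d ^ 2)) ℝ)
    (hG : ∀ i j, G i j = ((E i * E j).trace).re)
    (hGh : G.IsHermitian)
    (T : Matrix (Fin d) (Fin d) ℂ → Matrix (Fin d) (Fin d) ℂ)
    (hT : IsInvSqrtOfFrameOp E T) :
    (∑ j, ((E j * F j).trace).re) ≤ (Real.sqrt d)⁻¹ * ∑ k, Real.sqrt (hGh.eigenvalues k) ∧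
    ((∑ j, ((E j * F j).trace).re) = (Real.sqrt d)⁻¹ * ∑ k, Real.sqrt (hGh.eigenvalues k) ↔
      ∀ i, F i = T (E i)) := by
  classical
  obtain ⟨hEh, hEli, hEsum, hEtr⟩ := hE
  obtain ⟨⟨hFh, hFli, hFsum, hFtr⟩, hForthc⟩ := hF
  obtain ⟨⟨hTlin, hTherm, hTsa0, hTpos0⟩, hTinv⟩ := hT
  have hd0 : (0:ℝ) < (d:ℝ) := by exact_mod_cast Nat.pos_of_ne_zero (NeZero.ne d)
  have hdne : (d:ℝ) ≠ 0 := ne_of_gt hd0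
  have hsd : (0:ℝ) < Real.sqrt d := Real.sqrt_pos.mpr hd0
  have hsdd : Real.sqrt d * Real.sqrt d = (d:ℝ) := Real.mul_self_sqrt hd0.le
  let H := TOB.HermSub d
  let Ee : Fin (d^2) → H := fun i => ⟨E i, hEh i⟩
  let Ff : Fin (d^2) → H := fun i => ⟨F i, hFh i⟩
  let Tm : H →ₗ[ℝ] H := TOB.opOf T hTlin hTherm
  let Sm : H →ₗ[ℝ] H := TOB.SmOp E hEh
  let Am : H →ₗ[ℝ] H := Sm ∘ₗ Tm
  have hip : ∀ x y : H, ⟪x, y⟫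
      = (((x : Matrix (Fin d) (Fin d) ℂ) * (y : Matrix (Fin d) (Fin d) ℂ)).trace).re :=
    fun x y => rfl
  have hipc : ∀ x y : H, ⟪x, y⟫ = ⟪y, x⟫ := fun x y => real_inner_comm y x
  have hTsa : ∀ x y : H, ⟪Tm x, y⟫ = ⟪x, Tm y⟫ := by
    intro x y
    rw [hip, hip]
    exact congrArg Complex.re (hTsa0 x.1 y.1 x.2 y.2)
  have hTpos : ∀ x : H, 0 ≤ ⟪x, Tm x⟫ := fun x => hTpos0 x.1 x.2
  have hATid : ∀ x : H, Am (Tm x) = x := by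
    intro x
    apply Subtype.ext
    calc ((Am (Tm x) : H) : Matrix (Fin d) (Fin d) ℂ)
        = rsFrameOp E (T (T (x : Matrix (Fin d) (Fin d) ℂ))) :=
          TOB.SmOp_coe E hEh hEunb (Tm (Tm x))
      _ = (x : Matrix (Fin d) (Fin d) ℂ) := hTinv x.1 x.2
  have hTAid : ∀ x : H, Tm (Am x) = x := by
    have h1 : Am * Tm = 1 := LinearMap.ext fun x => hATid x
    have h2 := mul_eq_one_comm.mp h1
    intro x
    exact DFunLike.congr_fun h2 x
  have hAsa : ∀ x y : H, ⟪Am x, y⟫ = ⟪x, Am y⟫ := by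
    intro x y
    calc ⟪Am x, y⟫ = ⟪Am x, Tm (Am y)⟫ := by rw [hTAid]
      _ = ⟪Tm (Am x), Am y⟫ := (hTsa (Am x) (Am y)).symm
      _ = ⟪x, Am y⟫ := by rw [hTAid]
  have hApos : ∀ x : H, 0 ≤ ⟪x, Am x⟫ := by
    intro x
    calc (0:ℝ) ≤ ⟪Am x, Tm (Am x)⟫ := hTpos (Am x)
      _ = ⟪Tm (Am x), Am x⟫ := hipc _ _
      _ = ⟪x, Am x⟫ := by rw [hTAid]
  have hTker : ∀ y : H, ⟪y, Tm y⟫ = 0 → Tm y = 0 := by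
    intro y hy
    set a : ℝ := ⟪Tm y, Tm y⟫ with ha
    set c : ℝ := ⟪Tm y, Tm (Tm y)⟫ with hc
    have hc0 : 0 ≤ c := hTpos (Tm y)
    have key : ∀ t : ℝ, 0 ≤ 2 * t * a + t^2 * c := by
      intro t
      have h0 := hTpos (y + t • Tm y)
      have h2 : ⟪y, Tm (Tm y)⟫ = a := by rw [← hTsa]
      have hexp : ⟪y + t • Tm y, Tm (y + t • Tm y)⟫
          = ⟪y, Tm y⟫ + t * ⟪y, Tm (Tm y)⟫ + t * ⟪Tm y, Tm y⟫ + t^2 * c := by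
        rw [map_add, _root_.map_smul, inner_add_left, inner_add_right, inner_add_right,
          real_inner_smul_left, real_inner_smul_left, real_inner_smul_right,
          real_inner_smul_right]
        ring
      rw [hexp, hy, h2] at h0
      nlinarith [h0]
    have ha0 : 0 ≤ a := real_inner_self_nonneg
    have haz : a = 0 := by
      rcases eq_or_lt_of_le hc0 with hceq | hclt
      · have k := key (-1)
        rw [← hceq] at k
        have : 0 ≤ -2 * a := by nlinarith [k]
        nlinarith [ha0, this]
      · have k := key (-a / c)
        have hcne : c ≠ 0 := ne_of_gt hclt
        have heq : 2 * (-a / c) * a + (-a / c)^2 * c = -(a^2) / c := by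
          field_simp
          ring
        rw [heq] at k
        have k2 : 0 * c ≤ -(a^2) := by
          rw [← le_div_iff₀ hclt] at *
          simpa using k
        nlinarith [k2, ha0]
    exact inner_self_eq_zero.mp haz
  have hAker : ∀ x : H, ⟪x, Am x⟫ = 0 → x = 0 := by
    intro x hx
    have h1 : ⟪Am x, Tm (Am x)⟫ = 0 := by
      calc ⟪Am x, Tm (Am x)⟫ = ⟪Tm (Am x), Am x⟫ := hipc _ _
        _ = ⟪x, Am x⟫ := by rw [hTAid]
        _ = 0 := hx
    have h2 := hTker (Am x) h1
    calc x = Tm (Am x) := (hTAid x).symm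
      _ = 0 := h2
  -- E is a basis of H
  have hEli' : LinearIndependent ℝ Ee :=
    LinearIndependent.of_comp (TOB.HermSub d).subtype hEli
  have hSmApply : ∀ x : H, Sm x = ∑ k, ((d:ℝ) * ⟪x, Ee k⟫) • Ee k := fun x => rfl
  have hDelta : ∀ j k : Fin (d^2),
      (d:ℝ) * ⟪Tm (Tm (Ee j)), Ee k⟫ = if j = k then 1 else 0 := by
    intro j k
    have hSj : Sm (Tm (Tm (Ee j))) = Ee j := hATid (Ee j)
    have hexp : ∑ k, (((d:ℝ) * ⟪Tm (Tm (Ee j)), Ee k⟫ - if j = k then 1 else 0) • Ee k)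
        = 0 := by
      simp only [sub_smul, ite_smul, one_smul, zero_smul]
      rw [Finset.sum_sub_distrib]
      rw [← hSmApply, hSj, Finset.sum_ite_eq, if_pos (Finset.mem_univ j), sub_self]
    have := Fintype.linearIndependent_iff.mp hEli' _ hexp k
    linarith [this]
  have hWW : ∀ i j : Fin (d^2),
      ⟪Tm (Ee i), Tm (Ee j)⟫ = if i = j then (d:ℝ)⁻¹ else 0 := by
    intro i j
    have h1 : ⟪Tm (Ee i), Tm (Ee j)⟫ = ⟪Tm (Tm (Ee j)), Ee i⟫ := by
      rw [hTsa (Ee i) (Tm (Ee j)), hipc]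
    have h2 := hDelta j i
    rw [h1]
    rcases eq_or_ne i j with rfl | h
    · rw [if_pos rfl] at h2 ⊢
      field_simp
      linarith [h2]
    · rw [if_neg h]
      rw [if_neg (Ne.symm h)] at h2
      have := mul_eq_zero.mp h2
      tauto
  have hFF : ∀ i j : Fin (d^2), ⟪Ff i, Ff j⟫ = if i = j then (d:ℝ)⁻¹ else 0 := by
    intro i j
    rcases eq_or_ne i j with rfl | h
    · rw [if_pos rfl, hip]
      have hsum : ∑ k, (F i * F k).trace = (F i).trace := by
        rw [← Matrix.trace_sum, ← Matrix.mul_sum, hFsum, mul_one]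
      have honly : ∑ k, (F i * F k).trace = (F i * F i).trace := by
        rw [Finset.sum_eq_single i]
        · intro k _ hk
          exact hForthc i k (Ne.symm hk)
        · intro hmem
          exact absurd (Finset.mem_univ i) hmem
      have : (F i * F i).trace = ((d:ℂ))⁻¹ := by rw [← honly, hsum, hFunb]
      rw [show ((Ff i : H) : Matrix (Fin d) (Fin d) ℂ) = F i from rfl, this]
      rw [show ((d:ℂ))⁻¹ = (((d:ℝ)⁻¹ : ℝ) : ℂ) by push_cast; ring]
      exact Complex.ofReal_re _
    · rw [if_neg h, hip,
        show ((Ff i : H) : Matrix (Fin d) (Fin d) ℂ) = F i from rfl,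
        show ((Ff j : H) : Matrix (Fin d) (Fin d) ℂ) = F j from rfl,
        hForthc i j h]
      rfl
  -- orthonormal bases
  let w : Fin (d^2) → H := fun j => Real.sqrt d • Tm (Ee j)
  let f : Fin (d^2) → H := fun j => Real.sqrt d • Ff j
  have hwon : Orthonormal ℝ w := by
    rw [orthonormal_iff_ite]
    intro i j
    show ⟪Real.sqrt d • Tm (Ee i), Real.sqrt d • Tm (Ee j)⟫ = _
    rw [real_inner_smul_left, real_inner_smul_right, hWW]
    rcases eq_or_ne i j with rfl | h
    · rw [if_pos rfl, if_pos rfl]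
      field_simp [hsdd]
      exact Real.sq_sqrt hd0.le
    · rw [if_neg h, if_neg h]
      ring
  have hfon : Orthonormal ℝ f := by
    rw [orthonormal_iff_ite]
    intro i j
    show ⟪Real.sqrt d • Ff i, Real.sqrt d • Ff j⟫ = _
    rw [real_inner_smul_left, real_inner_smul_right, hFF]
    rcases eq_or_ne i j with rfl | h
    · rw [if_pos rfl, if_pos rfl]
      field_simp [hsdd]
      exact Real.sq_sqrt hd0.le
    · rw [if_neg h, if_neg h]
      ring
  have hcard : Fintype.card (Fin (d^2)) = Module.finrank ℝ H := by
    rw [Fintype.card_fin, TOB.finrank_hermSub]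
  have hd2pos : 0 < d^2 := pow_pos (Nat.pos_of_ne_zero (NeZero.ne d)) 2
  have : Nonempty (Fin (d^2)) := ⟨⟨0, hd2pos⟩⟩
  let bw0 := basisOfLinearIndependentOfCardEqFinrank hwon.linearIndependent hcard
  have hbw0 : ⇑bw0 = w := coe_basisOfLinearIndependentOfCardEqFinrank _ _
  let bw : OrthonormalBasis (Fin (d^2)) ℝ H := OrthonormalBasis.mk hwon
    (by rw [← hbw0]; exact ge_of_eq bw0.span_eq)
  have hbw : ⇑bw = w := OrthonormalBasis.coe_mk _ _
  let bf0 := basisOfLinearIndependentOfCardEqFinrank hfon.linearIndependent hcard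
  have hbf0 : ⇑bf0 = f := coe_basisOfLinearIndependentOfCardEqFinrank _ _
  let bf : OrthonormalBasis (Fin (d^2)) ℝ H := OrthonormalBasis.mk hfon
    (by rw [← hbf0]; exact ge_of_eq bf0.span_eq)
  have hbf : ⇑bf = f := OrthonormalBasis.coe_mk _ _
  have hParw : ∀ x y : H, ∑ k, ⟪x, w k⟫ * ⟪w k, y⟫ = ⟪x, y⟫ := by
    intro x y
    have := bw.sum_inner_mul_inner x y
    rwa [hbw] at this
  have hParf : ∀ x y : H, ∑ k, ⟪x, f k⟫ * ⟪f k, y⟫ = ⟪x, y⟫ := by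
    intro x y
    have := bf.sum_inner_mul_inner x y
    rwa [hbf] at this
  -- trace equality between the two orthonormal bases
  have hVF : ∑ j, ⟪Ff j, Am (Ff j)⟫ = ∑ k, ⟪Tm (Ee k), Am (Tm (Ee k))⟫ := by
    have core : ∑ j, ⟪f j, Am (f j)⟫ = ∑ k, ⟪w k, Am (w k)⟫ := by
      calc ∑ j, ⟪f j, Am (f j)⟫
          = ∑ j, ∑ k, ⟪f j, w k⟫ * ⟪w k, Am (f j)⟫ := by
            exact Finset.sum_congr rfl fun j _ => (hParw (f j) (Am (f j))).symm
        _ = ∑ k, ∑ j, ⟪Am (w k), f j⟫ * ⟪f j, w k⟫ := by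
            rw [Finset.sum_comm]
            refine Finset.sum_congr rfl fun k _ => Finset.sum_congr rfl fun j _ => ?_
            rw [hAsa (w k) (f j)]
            ring
        _ = ∑ k, ⟪Am (w k), w k⟫ :=
            Finset.sum_congr rfl fun k _ => hParf (Am (w k)) (w k)
        _ = ∑ k, ⟪w k, Am (w k)⟫ :=
            Finset.sum_congr rfl fun k _ => hipc _ _
    have hfj : ∀ j, ⟪f j, Am (f j)⟫ = (d:ℝ) * ⟪Ff j, Am (Ff j)⟫ := by
      intro j
      show ⟪Real.sqrt d • Ff j, Am (Real.sqrt d • Ff j)⟫ = _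
      rw [_root_.map_smul, real_inner_smul_left, real_inner_smul_right, ← mul_assoc, hsdd]
    have hwk : ∀ k, ⟪w k, Am (w k)⟫ = (d:ℝ) * ⟪Tm (Ee k), Am (Tm (Ee k))⟫ := by
      intro k
      show ⟪Real.sqrt d • Tm (Ee k), Am (Real.sqrt d • Tm (Ee k))⟫ = _
      rw [_root_.map_smul, real_inner_smul_left, real_inner_smul_right, ← mul_assoc, hsdd]
    have hl : ∑ j, ⟪f j, Am (f j)⟫ = (d:ℝ) * ∑ j, ⟪Ff j, Am (Ff j)⟫ := by
      rw [Finset.mul_sum]; exact Finset.sum_congr rfl fun j _ => hfj j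
    have hr : ∑ k, ⟪w k, Am (w k)⟫ = (d:ℝ) * ∑ k, ⟪Tm (Ee k), Am (Tm (Ee k))⟫ := by
      rw [Finset.mul_sum]; exact Finset.sum_congr rfl fun k _ => hwk k
    rw [hl, hr] at core
    exact mul_left_cancel₀ hdne core
  -- the trace identity via the Gram matrix square root
  have hAW : ∀ j, Am (Tm (Ee j)) = Ee j := fun j => hATid (Ee j)
  have hWA : ∀ j, ⟪Tm (Ee j), Am (Tm (Ee j))⟫ = ⟪Ee j, Tm (Ee j)⟫ := by
    intro j
    rw [hAW j, hipc]
  obtain ⟨V, hV⟩ : ∃ V : ℝ, V = ∑ j, ⟪Ee j, Tm (Ee j)⟫ := ⟨_, rfl⟩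
  let Bs : Matrix (Fin (d^2)) (Fin (d^2)) ℝ :=
    Matrix.of fun i j => Real.sqrt d * ⟪Ee i, Tm (Ee j)⟫
  have hBs_apply : ∀ i j, Bs i j = Real.sqrt d * ⟪Ee i, Tm (Ee j)⟫ := fun i j => rfl
  have hBsymm : ∀ i j, Bs j i = Bs i j := by
    intro i j
    rw [hBs_apply, hBs_apply]
    congr 1
    calc ⟪Ee j, Tm (Ee i)⟫ = ⟪Tm (Ee i), Ee j⟫ := hipc _ _
      _ = ⟪Ee i, Tm (Ee j)⟫ := hTsa (Ee i) (Ee j)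
  have hBherm : Bs.IsHermitian := by
    ext i j
    simp only [Matrix.conjTranspose_apply, star_trivial]
    exact hBsymm i j
  have hGw : ∀ i j, G i j = ⟪Ee i, Ee j⟫ := fun i j => by rw [hG, hip]
  have hBsq0 : Bs * Bs = G := by
    ext i j
    rw [Matrix.mul_apply]
    rw [hGw i j]
    rw [← hParw (Ee i) (Ee j)]
    refine Finset.sum_congr rfl fun k _ => ?_
    rw [hBs_apply, hBs_apply]
    have h1 : ⟪Ee i, w k⟫ = Real.sqrt d * ⟪Ee i, Tm (Ee k)⟫ := by
      show ⟪Ee i, Real.sqrt d • Tm (Ee k)⟫ = _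
      rw [real_inner_smul_right]
    have h2 : ⟪w k, Ee j⟫ = Real.sqrt d * ⟪Ee k, Tm (Ee j)⟫ := by
      show ⟪Real.sqrt d • Tm (Ee k), Ee j⟫ = _
      rw [real_inner_smul_left, hTsa (Ee k) (Ee j)]
    rw [h1, h2]
  have hBsq : Bs ^ 2 = G := (pow_two Bs).trans hBsq0
  have hBpsd : Bs.PosSemidef := by
    refine Matrix.posSemidef_iff_dotProduct_mulVec.2 ⟨hBherm, fun x => ?_⟩
    obtain ⟨y, hy⟩ : ∃ y : H, y = ∑ i, x i • Ee i := ⟨_, rfl⟩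
    have hTy : Tm (∑ i, x i • Ee i) = ∑ j, x j • Tm (Ee j) :=
      (_root_.map_sum Tm (fun i => x i • Ee i) Finset.univ).trans
        (Finset.sum_congr rfl fun j _ => _root_.map_smul Tm (x j) (Ee j))
    have hyy : ⟪y, Tm y⟫ = ∑ i, ∑ j, x i * (x j * ⟪Ee i, Tm (Ee j)⟫) := by
      rw [hy, hTy, sum_inner]
      refine Finset.sum_congr rfl fun i _ => ?_
      rw [real_inner_smul_left, inner_sum, Finset.mul_sum]
      refine Finset.sum_congr rfl fun j _ => ?_
      rw [real_inner_smul_right]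
    have hdot : star x ⬝ᵥ Bs *ᵥ x = ∑ i, ∑ j, x i * (Bs i j * x j) := by
      simp [dotProduct, Matrix.mulVec, Finset.mul_sum]
    have h1 : star x ⬝ᵥ Bs *ᵥ x = Real.sqrt d * ⟪y, Tm y⟫ := by
      rw [hdot, hyy, Finset.mul_sum]
      refine Finset.sum_congr rfl fun i _ => ?_
      rw [Finset.mul_sum]
      refine Finset.sum_congr rfl fun j _ => ?_
      rw [hBs_apply]
      ring
    rw [h1]
    exact mul_nonneg hsd.le (hTpos y)
  have hGpsd : G.PosSemidef := hBsq ▸ hBpsd.pow 2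
  have htrsqrt : Bs.trace = ∑ k, Real.sqrt (hGh.eigenvalues k) := by
    open scoped MatrixOrder in
    rw [← CFC.sqrt_unique hBsq0 hBpsd.nonneg, CFC.sqrt_eq_cfc, cfc_nnreal_eq_real _ G hGpsd.nonneg,
      hGh.cfc_eq, IsHermitian.cfc, Unitary.conjStarAlgAut_apply, Matrix.trace_mul_cycle]
    simp [Matrix.trace_diagonal]
    refine Finset.sum_congr rfl fun k _ => ?_
    rw [max_eq_left (hGpsd.eigenvalues_nonneg k)]
  have hVval : V = (Real.sqrt d)⁻¹ * ∑ k, Real.sqrt (hGh.eigenvalues k) := by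
    have h1 : Bs.trace = Real.sqrt d * V := by
      rw [hV, Finset.mul_sum]
      exact Finset.sum_congr rfl fun i _ => hBs_apply i i
    rw [htrsqrt] at h1
    rw [h1, ← mul_assoc, inv_mul_cancel₀ (ne_of_gt hsd), one_mul]
  -- the defect terms
  obtain ⟨cc, hccj⟩ : ∃ cc : Fin (d^2) → ℝ,
      ∀ j, cc j = ⟪Tm (Ee j) - Ff j, Am (Tm (Ee j) - Ff j)⟫ := ⟨_, fun j => rfl⟩
  have hccnn : ∀ j, 0 ≤ cc j := fun j => (hccj j) ▸ hApos _
  have hccval : ∀ j, cc j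
      = ⟪Ee j, Tm (Ee j)⟫ + ⟪Ff j, Am (Ff j)⟫ - 2 * ⟪Ee j, Ff j⟫ := by
    intro j
    have e1 : ⟪Tm (Ee j), Am (Tm (Ee j))⟫ = ⟪Ee j, Tm (Ee j)⟫ := hWA j
    have e2 : ⟪Tm (Ee j), Am (Ff j)⟫ = ⟪Ee j, Ff j⟫ := by
      rw [← hAsa (Tm (Ee j)) (Ff j), hAW j]
    have e3 : ⟪Ff j, Am (Tm (Ee j))⟫ = ⟪Ee j, Ff j⟫ := by
      rw [hAW j, hipc]
    rw [hccj j, map_sub, inner_sub_left, inner_sub_right, inner_sub_right, e1, e2, e3]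
    ring
  have hkey : ∑ j, ⟪Ee j, Ff j⟫ = V - (∑ j, cc j) / 2 := by
    have hs : ∑ j, cc j = V + V - 2 * ∑ j, ⟪Ee j, Ff j⟫ := by
      calc ∑ j, cc j
          = ∑ j, (⟪Ee j, Tm (Ee j)⟫ + ⟪Ff j, Am (Ff j)⟫ - 2 * ⟪Ee j, Ff j⟫) :=
            Finset.sum_congr rfl fun j _ => hccval j
        _ = (∑ j, ⟪Ee j, Tm (Ee j)⟫) + (∑ j, ⟪Ff j, Am (Ff j)⟫)
            - 2 * ∑ j, ⟪Ee j, Ff j⟫ := by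
            rw [Finset.sum_sub_distrib, Finset.sum_add_distrib, Finset.mul_sum]
        _ = V + V - 2 * ∑ j, ⟪Ee j, Ff j⟫ := by
            rw [hVF]
            congr 1
            rw [hV]
            congr 1
            exact Finset.sum_congr rfl fun k _ => hWA k
    linarith [hs]
  have hout : ∑ j, ((E j * F j).trace).re = ∑ j, ⟪Ee j, Ff j⟫ :=
    Finset.sum_congr rfl fun j _ => rfl
  constructor
  · rw [hout, ← hVval, hkey]
    have : 0 ≤ ∑ j, cc j := Finset.sum_nonneg fun j _ => hccnn j
    linarith
  · constructor
    · intro heq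
      rw [hout, ← hVval, hkey] at heq
      have hsum0 : ∑ j, cc j = 0 := by linarith [heq]
      have hzero : ∀ j ∈ Finset.univ, cc j = 0 :=
        (Finset.sum_eq_zero_iff_of_nonneg fun j _ => hccnn j).mp hsum0
      intro i
      have hxi : Tm (Ee i) - Ff i = 0 := hAker _ (by
        rw [← hccj i]; exact hzero i (Finset.mem_univ i))
      have hFfW : Ff i = Tm (Ee i) := by
        have := sub_eq_zero.mp hxi
        exact this.symm
      exact (congrArg Subtype.val hFfW :)
    · intro hFT
      have hcc0 : ∀ j, cc j = 0 := by
        intro j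
        have hFfW : Ff j = Tm (Ee j) := Subtype.ext (hFT j)
        rw [hccj j, hFfW, sub_self, map_zero, inner_zero_right]
      rw [hout, ← hVval, hkey]
      rw [Finset.sum_congr rfl fun j _ => hcc0 j]
      simp
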